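/- Misspecification in the low-reward region does not cap attainable performance: for 0 < c < 1, the 'worst c% wrong' win rate W_worst(β) = (∫₀^{c} (c − u)·e^{u/β} du + ∫_{c}^{1} u·e^{u/β} du) / (β·(e^{1/β} − 1)) tends to 1 as β → 0⁺. -/

import Mathlib

open MeasureTheory Real Filter

/-- Win rate under the 'worst c% wrong' proxy reward. -/
noncomputable def Wworst (c β : ℝ) : ℝ :=
  ((∫ u in (0:ℝ)..c, (c - u) * Real.exp (u / β))
      + ∫ u in c..(1:ℝ), u * Real.exp (u / β))
    / (β * (Real.exp (1 / β) - 1))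

lemma hasDerivAt_exp_div (β u : ℝ) :
    HasDerivAt (fun u => Real.exp (u / β)) (Real.exp (u / β) / β) u := by
  have := (Real.hasDerivAt_exp (u / β)).comp u ((hasDerivAt_id u).div_const β)
  simpa [div_eq_mul_inv, mul_comm, Function.comp_def] using this

lemma integral_id_mul_exp (β a b : ℝ) (hβ : β ≠ 0) :
    ∫ u in a..b, u * Real.exp (u / β)
      = (β * b - β ^ 2) * Real.exp (b / β) - (β * a - β ^ 2) * Real.exp (a / β) := by
  have h : ∀ u ∈ Set.uIcc a b, HasDerivAt (fun u => (β * u - β ^ 2) * Real.exp (u / β))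
      (u * Real.exp (u / β)) u := by
    intro u _
    have h1 : HasDerivAt (fun u => β * u - β ^ 2) β u := by
      simpa using ((hasDerivAt_id u).const_mul β).sub_const (β ^ 2)
    have := h1.mul (hasDerivAt_exp_div β u)
    refine this.congr_deriv ?_
    field_simp
    ring
  rw [intervalIntegral.integral_eq_sub_of_hasDerivAt h]
  exact (Continuous.intervalIntegrable (by continuity) a b)

lemma integral_sub_mul_exp (c β a b : ℝ) (hβ : β ≠ 0) :
    ∫ u in a..b, (c - u) * Real.exp (u / β)
      = (c * β - β * b + β ^ 2) * Real.exp (b / β)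
        - (c * β - β * a + β ^ 2) * Real.exp (a / β) := by
  have h : ∀ u ∈ Set.uIcc a b,
      HasDerivAt (fun u => (c * β - β * u + β ^ 2) * Real.exp (u / β))
      ((c - u) * Real.exp (u / β)) u := by
    intro u _
    have h1 : HasDerivAt (fun u => c * β - β * u + β ^ 2) (-β) u := by
      simpa using (((hasDerivAt_id u).const_mul β).const_sub (c * β)).add_const (β ^ 2)
    have := h1.mul (hasDerivAt_exp_div β u)
    refine this.congr_deriv ?_
    field_simp
    ring
  rw [intervalIntegral.integral_eq_sub_of_hasDerivAt h]
  exact (Continuous.intervalIntegrable (by continuity) a b)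

lemma tendsto_exp_div_neg (k : ℝ) (hk : k < 0) :
    Tendsto (fun β : ℝ => Real.exp (k / β)) (nhdsWithin 0 (Set.Ioi 0)) (nhds 0) := by
  have h1 : Tendsto (fun β : ℝ => β⁻¹) (nhdsWithin 0 (Set.Ioi 0)) atTop :=
    tendsto_inv_nhdsGT_zero
  have h2 : Tendsto (fun β : ℝ => k / β) (nhdsWithin 0 (Set.Ioi 0)) atBot := by
    have := h1.const_mul_atTop (neg_pos.mpr hk)
    have h3 := (tendsto_neg_atTop_atBot).comp this
    refine h3.congr fun β => ?_
    simp [div_eq_mul_inv]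
  exact Real.tendsto_exp_atBot.comp h2

/-- Misspecification in the low-reward region does not cap attainable performance:
the 'worst c% wrong' win rate tends to `1` as `β → 0⁺`. -/
theorem worst_wrong_win_rate_limit (c : ℝ) (hc : 0 < c) (hc1 : c < 1) :
    Tendsto (fun β => Wworst c β) (nhdsWithin 0 (Set.Ioi 0)) (nhds 1) := by
  -- closed form on Ioi 0
  have key : ∀ β ∈ Set.Ioi (0:ℝ), Wworst c β
      = ((1 - β) + (2 * β - c) * Real.exp ((c - 1) / β)
          - (β + c) * Real.exp (-1 / β)) / (1 - Real.exp (-1 / β)) := by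
    intro β hβ
    have hβ0 : (0:ℝ) < β := hβ
    have hβ' : β ≠ 0 := ne_of_gt hβ0
    have hx : Real.exp (1 / β) ≠ 0 := Real.exp_ne_zero _
    have hx1 : 1 < Real.exp (1 / β) := by
      rw [show (1:ℝ) = Real.exp 0 by simp]
      exact Real.exp_lt_exp.mpr (by positivity)
    have hxd : Real.exp (1 / β) - 1 ≠ 0 := sub_ne_zero.mpr (ne_of_gt hx1)
    have e1 : Real.exp (-1 / β) = (Real.exp (1 / β))⁻¹ := by
      rw [← Real.exp_neg, neg_div]
    have e2 : Real.exp ((c - 1) / β) = Real.exp (c / β) / Real.exp (1 / β) := by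
      rw [← Real.exp_sub, sub_div]
    have hden : 1 - Real.exp (-1 / β) ≠ 0 := by
      rw [e1]
      have : (Real.exp (1 / β))⁻¹ < 1 := by
        rw [inv_lt_one_iff₀]; right; exact hx1
      linarith
    unfold Wworst
    rw [integral_id_mul_exp β c 1 hβ', integral_sub_mul_exp c β 0 c hβ', e1, e2, zero_div, Real.exp_zero]
    field_simp
    ring
  have congr' : (fun β => Wworst c β) =ᶠ[nhdsWithin 0 (Set.Ioi 0)]
      (fun β => ((1 - β) + (2 * β - c) * Real.exp ((c - 1) / β)
          - (β + c) * Real.exp (-1 / β)) / (1 - Real.exp (-1 / β))) := by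
    filter_upwards [self_mem_nhdsWithin] with β hβ using key β hβ
  rw [Filter.tendsto_congr' congr']
  have hβ0 : Tendsto (fun β : ℝ => β) (nhdsWithin 0 (Set.Ioi 0)) (nhds 0) :=
    tendsto_id.mono_left nhdsWithin_le_nhds
  have hE1 : Tendsto (fun β : ℝ => Real.exp (-1 / β)) (nhdsWithin 0 (Set.Ioi 0)) (nhds 0) :=
    tendsto_exp_div_neg (-1) (by norm_num)
  have hE2 : Tendsto (fun β : ℝ => Real.exp ((c - 1) / β)) (nhdsWithin 0 (Set.Ioi 0)) (nhds 0) :=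
    tendsto_exp_div_neg (c - 1) (by linarith)
  have hnum : Tendsto (fun β : ℝ => (1 - β) + (2 * β - c) * Real.exp ((c - 1) / β)
      - (β + c) * Real.exp (-1 / β)) (nhdsWithin 0 (Set.Ioi 0)) (nhds 1) := by
    have := (((tendsto_const_nhds (x := (1:ℝ))).sub hβ0).add
        (((hβ0.const_mul (2:ℝ)).sub (tendsto_const_nhds (x := c))).mul hE2)).sub
        ((hβ0.add (tendsto_const_nhds (x := c))).mul hE1)
    simpa using this
  have hden : Tendsto (fun β : ℝ => 1 - Real.exp (-1 / β)) (nhdsWithin 0 (Set.Ioi 0)) (nhds 1) := by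
    simpa using tendsto_const_nhds.sub hE1
  have := hnum.div hden (by norm_num)
  rw [div_one] at this
  exact this
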